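/- Let t_0, t_1, …, t_N ∈ ℤ and set s_i = Σ_{j=i}^{N} b_j·t_j for 0 ≤ i ≤ N (with the convention b_N = 1). If 0 ≤ k ≤ N and M_i divides s_i for every i ≠ k, then M_k divides s_k. -/

import Mathlib

open Finset MvPolynomial

/-- `Mf b i` is `M_i = lcm(b_{i-1}, b_i)`, with the convention `b_{-1} = 1`
(the convention `b_N = 1` is imposed as a hypothesis in the statements). -/
def Mf (b : ℕ → ℕ) (i : ℕ) : ℕ := Nat.lcm (if i = 0 then 1 else b (i - 1)) (b i)

/-- An LS-path of degree `r` over the totally ordered set `{0, …, N}` with bonds `b`: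
a function `π : {0,…,N} → ℚ` (modelled as `π : ℕ → ℚ` vanishing above `N`) with
nonnegative values, integrality `b_j·(π 0 + ⋯ + π j) ∈ ℤ` for all `0 ≤ j ≤ N-1`,
and total sum `π 0 + ⋯ + π N = r`. -/
def IsLSPath (N : ℕ) (b : ℕ → ℕ) (r : ℕ) (π : ℕ → ℚ) : Prop :=
  (∀ i, 0 ≤ π i) ∧ (∀ i, N < i → π i = 0) ∧
  (∀ j < N, ∃ k : ℤ, (b j : ℚ) * (∑ i ∈ Finset.range (j + 1), π i) = k) ∧
  (∑ i ∈ Finset.range (N + 1), π i = r)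

/-- `SuppLE π π'` says `max supp π ≤ min supp π'`:
every element of the support of `π` is `≤` every element of the support of `π'`. -/
def SuppLE (π π' : ℕ → ℚ) : Prop := ∀ i j, π i ≠ 0 → π' j ≠ 0 → i ≤ j

/-- Let `t_0, …, t_N ∈ ℤ` and `s_i = ∑_{j=i}^{N} b_j·t_j` (with the convention
`b_N = 1`). If `0 ≤ k ≤ N` and `M_i ∣ s_i` for every `i ≠ k`, then `M_k ∣ s_k`. -/
theorem stmt12 (N : ℕ) (hN : 1 ≤ N) (b : ℕ → ℕ) (hb : ∀ i < N, 0 < b i) (hbN : b N = 1)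
    (t : ℕ → ℤ) (k : ℕ) (hk : k ≤ N)
    (h : ∀ i ≤ N, i ≠ k → (Mf b i : ℤ) ∣ ∑ j ∈ Finset.Icc i N, (b j : ℤ) * t j) :
    (Mf b k : ℤ) ∣ ∑ j ∈ Finset.Icc k N, (b j : ℤ) * t j := by
  set s : ℕ → ℤ := fun i => ∑ j ∈ Finset.Icc i N, (b j : ℤ) * t j with hs
  have hstep : ∀ i ≤ N, s i = (b i : ℤ) * t i + s (i + 1) := by
    intro i hi
    simp only [hs]
    rw [Finset.Icc_eq_cons_Ioc hi, Finset.sum_cons, ← Finset.Icc_add_one_left_eq_Ioc]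
  have hA : (b k : ℤ) ∣ s k := by
    rcases eq_or_lt_of_le hk with rfl | hkN
    · have hsk : s k = (b k : ℤ) * t k := by simp [hs]
      rw [hsk, hbN]; simp
    · rw [hstep k hk]
      refine dvd_add (Dvd.intro _ rfl) ?_
      refine dvd_trans ?_ (h (k + 1) hkN (by omega))
      exact Int.natCast_dvd_natCast.mpr (by unfold Mf; simp [Nat.dvd_lcm_left])
  have hB : ((if k = 0 then 1 else b (k - 1) : ℕ) : ℤ) ∣ s k := by
    rcases Nat.eq_zero_or_pos k with rfl | hk0
    · simp
    · rw [if_neg (by omega : ¬ k = 0)]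
      have hk1 : k - 1 ≤ N := by omega
      have hd : ((b (k - 1) : ℕ) : ℤ) ∣ s (k - 1) := by
        refine dvd_trans ?_ (h (k - 1) hk1 (by omega))
        exact Int.natCast_dvd_natCast.mpr (by unfold Mf; simp [Nat.dvd_lcm_right])
      have hst := hstep (k - 1) hk1
      rw [(by omega : k - 1 + 1 = k)] at hst
      have hsk : s k = s (k - 1) - (b (k - 1) : ℤ) * t (k - 1) := by linarith
      rw [hsk]
      exact dvd_sub hd (Dvd.intro _ rfl)
  have hlcm := Int.coe_lcm_dvd hB hA
  unfold Mf
  split_ifs with h0 <;> [skip; skip] <;>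
    simpa [Int.lcm, h0] using hlcm
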